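/- Let C be a small category with pushouts, I a small filtered category, and X : Iᵒᵖ ⥤ C a cofiltered system, with transition morphisms X(τ) : X j ⟶ X i for τ : i ⟶ j in I. Let Y be an object of C and (f_i : Y ⟶ X i) a cone over the system (i.e. X(τ) ∘ f_j = f_i for all τ : i ⟶ j), inducing the canonical natural transformation φ : colim_i Hom_C(X i, −) ⟶ Hom_C(Y, −) in (C ⥤ Type). Suppose there is i₀ and a morphism g : X i₀ ⟶ Y in C with g ∘ f_{i₀} = 𝟙_Y, and that for every i there is a morphism τ : i ⟶ j in I such that the canonical morphism X i ⊔_Y X i ⟶ X i ⊔_{X j} X i (from the cokernel pair of f_i to the cokernel pair of X(τ), induced by f_i = X(τ) ∘ f_j) is an isomorphism in C. Then φ is an isomorphism; that is, the cone (f_i) exhibits Y as the pro-limit of the system, and the morphism Y ⟶ Pro(X) induced by the cone is an isomorphism of pro-objects with inverse induced by g. -/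

import Mathlib

open CategoryTheory CategoryTheory.Limits Opposite

universe u

theorem pro_iso_criterion_cokernel_pairs {C : Type u} [SmallCategory C] [HasPushouts C]
    {I : Type u} [SmallCategory I] [IsFiltered I] (X : Iᵒᵖ ⥤ C) (Y : C)
    (f : ∀ i : I, Y ⟶ X.obj (op i))
    (hcone : ∀ (i j : I) (τ : i ⟶ j), f j ≫ X.map τ.op = f i)
    (φ : colimit (X.rightOp ⋙ coyoneda) ⟶ coyoneda.obj (op Y))
    (hφ : ∀ i : I, colimit.ι (X.rightOp ⋙ coyoneda) i ≫ φ = coyoneda.map (f i).op)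
    (i₀ : I) (g : X.obj (op i₀) ⟶ Y) (hg : f i₀ ≫ g = 𝟙 Y)
    (H : ∀ i : I, ∃ (j : I) (τ : i ⟶ j) (w : f i ≫ 𝟙 (X.obj (op i)) = f j ≫ X.map τ.op),
      IsIso (pushout.map (f i) (f i) (X.map τ.op) (X.map τ.op)
        (𝟙 (X.obj (op i))) (𝟙 (X.obj (op i))) (f j) w w)) :
    IsIso φ ∧
      φ ≫ (coyoneda.map g.op ≫ colimit.ι (X.rightOp ⋙ coyoneda) i₀) =
        𝟙 (colimit (X.rightOp ⋙ coyoneda)) ∧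
      (coyoneda.map g.op ≫ colimit.ι (X.rightOp ⋙ coyoneda) i₀) ≫ φ =
        𝟙 (coyoneda.obj (op Y)) := by
  set ψ := coyoneda.map g.op ≫ colimit.ι (X.rightOp ⋙ coyoneda) i₀ with hψ
  have key : ∀ i : I, ∃ (l : I) (m : i ⟶ l) (n : i₀ ⟶ l),
      X.map m.op = X.map n.op ≫ g ≫ f i := by
    intro i
    set k := IsFiltered.max i i₀ with hk
    set α : i ⟶ k := IsFiltered.leftToMax i i₀ with hα
    set β : i₀ ⟶ k := IsFiltered.rightToMax i i₀ with hβ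
    obtain ⟨l, τ, w, hiso⟩ := H k
    refine ⟨l, α ≫ τ, β ≫ τ, ?_⟩
    have hab : f k ≫ X.map α.op = f k ≫ (X.map β.op ≫ (g ≫ f i)) := by
      rw [hcone i k α, ← Category.assoc, hcone i₀ k β, ← Category.assoc, hg,
        Category.id_comp]
    set p := pushout.map (f k) (f k) (X.map τ.op) (X.map τ.op)
      (𝟙 (X.obj (op k))) (𝟙 (X.obj (op k))) (f l) w w with hp
    set d : pushout (X.map τ.op) (X.map τ.op) ⟶ X.obj (op i) :=
      inv p ≫ pushout.desc (X.map α.op) (X.map β.op ≫ (g ≫ f i)) hab with hd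
    have hinl : pushout.inl (X.map τ.op) (X.map τ.op) ≫ d = X.map α.op := by
      have h1 : pushout.inl (f k) (f k) ≫ p = pushout.inl (X.map τ.op) (X.map τ.op) := by
        rw [hp]; exact (pushout.inl_desc _ _ _).trans (Category.id_comp _)
      have h2 : pushout.inl (X.map τ.op) (X.map τ.op) ≫ inv p = pushout.inl (f k) (f k) := by
        rw [← h1]; simp
      rw [hd, ← Category.assoc, h2, pushout.inl_desc]
    have hinr : pushout.inr (X.map τ.op) (X.map τ.op) ≫ d = X.map β.op ≫ (g ≫ f i) := by
      have h1 : pushout.inr (f k) (f k) ≫ p = pushout.inr (X.map τ.op) (X.map τ.op) := by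
        rw [hp]; exact (pushout.inr_desc _ _ _).trans (Category.id_comp _)
      have h2 : pushout.inr (X.map τ.op) (X.map τ.op) ≫ inv p = pushout.inr (f k) (f k) := by
        rw [← h1]; simp
      rw [hd, ← Category.assoc, h2, pushout.inr_desc]
    have := pushout.condition (f := X.map τ.op) (g := X.map τ.op)
    calc X.map (α ≫ τ).op = X.map τ.op ≫ X.map α.op := by
          rw [← X.map_comp]; rfl
      _ = X.map τ.op ≫ pushout.inl (X.map τ.op) (X.map τ.op) ≫ d := by rw [hinl]
      _ = X.map τ.op ≫ pushout.inr (X.map τ.op) (X.map τ.op) ≫ d := by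
          rw [← Category.assoc, this, Category.assoc]
      _ = X.map τ.op ≫ X.map β.op ≫ (g ≫ f i) := by rw [hinr]
      _ = X.map (β ≫ τ).op ≫ g ≫ f i := by
          rw [← Category.assoc, ← X.map_comp]; rfl
  have hψφ : ψ ≫ φ = 𝟙 (coyoneda.obj (op Y)) := by
    rw [hψ, Category.assoc, hφ i₀, ← coyoneda.map_comp, ← op_comp, hg, op_id,
      coyoneda.map_id]
  have hφψ : φ ≫ ψ = 𝟙 (colimit (X.rightOp ⋙ coyoneda)) := by
    apply colimit.hom_ext
    intro i
    rw [← Category.assoc, hφ i, Category.comp_id, hψ]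
    obtain ⟨l, m, n, hkey⟩ := key i
    have wi : (X.rightOp ⋙ coyoneda).map m ≫ colimit.ι (X.rightOp ⋙ coyoneda) l =
        colimit.ι (X.rightOp ⋙ coyoneda) i := colimit.w _ m
    have wi₀ : (X.rightOp ⋙ coyoneda).map n ≫ colimit.ι (X.rightOp ⋙ coyoneda) l =
        colimit.ι (X.rightOp ⋙ coyoneda) i₀ := colimit.w _ n
    rw [← wi, ← wi₀]
    rw [← Category.assoc, ← Category.assoc]
    congr 1
    show (coyoneda.map (f i).op ≫ coyoneda.map g.op) ≫ coyoneda.map (X.map n.op).op =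
      coyoneda.map (X.map m.op).op
    rw [Category.assoc]
    rw [← coyoneda.map_comp, ← coyoneda.map_comp, ← op_comp, ← op_comp]
    congr 1
    rw [hkey]
    simp
  exact ⟨⟨ψ, hφψ, hψφ⟩, hφψ, hψφ⟩
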